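/- Let D be a domain and let A ⊆ A' be subrings of D. Suppose that A is right noetherian and that A contains a non-zero right ideal of D, i.e. there is a right ideal J ≠ 0 of D with J ⊆ A. Then A' is right noetherian; moreover A' is a finitely generated right A-module. -/

import Mathlib

set_option maxHeartbeats 1000000 in
set_option synthInstance.maxHeartbeats 400000 in
/-- Let `D` be a domain and `A ⊆ A'` subrings of `D`. If `A` is right
noetherian and `A` contains a nonzero right ideal of `D`, then `A'` is right noetherian;
moreover `A'` is a finitely generated right `A`-module. Right noetherianity of a ring `S`
is expressed as `IsNoetherianRing Sᵐᵒᵖ`, and finite generation of `A'` as a right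
`A`-module is expressed by a finite subset `s ⊆ A'` whose right `A`-multiples additively
generate `A'`. -/
theorem subring_containing_right_ideal_rightNoetherian
    {D : Type*} [Ring D] [IsDomain D]
    (A A' : Subring D) (hAA' : A ≤ A')
    (hA : IsNoetherianRing (↥A)ᵐᵒᵖ)
    (J : Submodule Dᵐᵒᵖ D) (hJ : J ≠ ⊥) (hJA : (J : Set D) ⊆ (A : Set D)) :
    IsNoetherianRing (↥A')ᵐᵒᵖ ∧
      ∃ s : Finset D, (s : Set D) ⊆ (A' : Set D) ∧
        ∀ x ∈ A', x ∈ AddSubgroup.closure {z : D | ∃ y ∈ s, ∃ a ∈ A, z = y * a} := by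
  classical
  obtain ⟨c, hcJ, hc0⟩ := (Submodule.ne_bot_iff J).mp hJ
  -- key fact: c * d ∈ A for all d
  have hc : ∀ d : D, c * d ∈ A := fun d => by
    have := J.smul_mem (MulOpposite.op d) hcJ
    simpa using hJA this
  have hBB' : A.op ≤ A'.op := Subring.op_le_op_iff.mpr hAA'
  -- A.op is left noetherian
  haveI hB : IsNoetherianRing ↥A.op := isNoetherianRing_of_ringEquiv _ A.mopRingEquivOp
  -- A'.op as a left A.op-submodule of Dᵐᵒᵖ
  let N : Submodule ↥A.op Dᵐᵒᵖ :=
    { carrier := A'.op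
      add_mem' := fun h1 h2 => add_mem h1 h2
      zero_mem' := zero_mem _
      smul_mem' := fun b x hx => A'.op.mul_mem (hBB' b.2) hx }
  -- A.op itself as a left A.op-submodule of Dᵐᵒᵖ
  let NA : Submodule ↥A.op Dᵐᵒᵖ :=
    { carrier := A.op
      add_mem' := fun h1 h2 => add_mem h1 h2
      zero_mem' := zero_mem _
      smul_mem' := fun b x hx => A.op.mul_mem b.2 hx }
  -- NA is a noetherian module, being isomorphic to A.op itself
  let e : ↥A.op ≃ₗ[↥A.op] ↥NA :=
    { toFun := fun b => ⟨(b : Dᵐᵒᵖ), b.2⟩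
      invFun := fun x => ⟨x.1, x.2⟩
      map_add' := fun _ _ => rfl
      map_smul' := fun _ _ => rfl
      left_inv := fun _ => rfl
      right_inv := fun _ => rfl }
  haveI : IsNoetherian ↥A.op ↥A.op := hB
  haveI hNA : IsNoetherian ↥A.op ↥NA := isNoetherian_of_linearEquiv e
  -- the injective linear map N → NA, x ↦ x * op c
  let φ : ↥N →ₗ[↥A.op] ↥NA :=
    { toFun := fun x => ⟨(x : Dᵐᵒᵖ) * MulOpposite.op c, hc (MulOpposite.unop (x : Dᵐᵒᵖ))⟩
      map_add' := fun x y => Subtype.ext (add_mul _ _ _)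
      map_smul' := fun b x => Subtype.ext (mul_assoc _ _ _) }
  have hφinj : Function.Injective φ := by
    intro x y hxy
    have h1 : (x : Dᵐᵒᵖ) * MulOpposite.op c = (y : Dᵐᵒᵖ) * MulOpposite.op c :=
      congrArg Subtype.val hxy
    have h2 : ((x : Dᵐᵒᵖ) - (y : Dᵐᵒᵖ)) * MulOpposite.op c = 0 := by
      rw [sub_mul, h1, sub_self]
    have hc0' : (MulOpposite.op c : Dᵐᵒᵖ) ≠ 0 := by simpa using hc0
    rcases mul_eq_zero.mp h2 with h | h
    · exact Subtype.ext (by rwa [sub_eq_zero] at h)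
    · exact absurd h hc0'
  haveI hN : IsNoetherian ↥A.op ↥N := isNoetherian_of_injective φ hφinj
  -- transfer noetherianity of N to the ring A'.op
  letI : Module ↥A.op ↥A'.op := (Subring.inclusion hBB').toModule
  haveI : IsScalarTower ↥A.op ↥A'.op ↥A'.op :=
    ⟨fun b x y => Subtype.ext (mul_assoc (b : Dᵐᵒᵖ) (x : Dᵐᵒᵖ) (y : Dᵐᵒᵖ))⟩
  let e2 : ↥N ≃ₗ[↥A.op] ↥A'.op :=
    { toFun := fun x => ⟨(x : Dᵐᵒᵖ), x.2⟩
      invFun := fun x => ⟨(x : Dᵐᵒᵖ), x.2⟩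
      map_add' := fun _ _ => rfl
      map_smul' := fun _ _ => rfl
      left_inv := fun _ => rfl
      right_inv := fun _ => rfl }
  haveI : IsNoetherian ↥A.op ↥A'.op := (LinearEquiv.isNoetherian_iff e2).mp hN
  haveI : IsNoetherian ↥A'.op ↥A'.op := isNoetherian_of_tower ↥A.op this
  haveI hB'noeth : IsNoetherianRing ↥A'.op := this
  constructor
  · exact isNoetherianRing_of_ringEquiv _ A'.mopRingEquivOp.symm
  -- finite generation
  have hfg : N.FG := by
    rw [← Submodule.fg_top]
    exact IsNoetherian.noetherian ⊤
  obtain ⟨T, hT⟩ := hfg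
  refine ⟨T.image MulOpposite.unop, ?_, ?_⟩
  · intro y hy
    simp only [Finset.coe_image, Set.mem_image, Finset.mem_coe] at hy
    obtain ⟨t, htT, rfl⟩ := hy
    have : t ∈ N := hT ▸ Submodule.subset_span htT
    exact this
  · intro x hx
    set Z : Set D := {z : D | ∃ y ∈ T.image MulOpposite.unop, ∃ a ∈ A, z = y * a} with hZ
    -- closure of Z is stable under right multiplication by elements of A
    have hstab : ∀ z ∈ AddSubgroup.closure Z, ∀ a ∈ A, z * a ∈ AddSubgroup.closure Z := by
      intro z hz a ha
      induction hz using AddSubgroup.closure_induction with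
      | mem w hw =>
          obtain ⟨y, hy, a', ha', rfl⟩ := hw
          exact AddSubgroup.subset_closure ⟨y, hy, a' * a, A.mul_mem ha' ha, mul_assoc _ _ _⟩
      | zero => simpa using (AddSubgroup.closure Z).zero_mem
      | add u v hu hv hu' hv' => rw [add_mul]; exact (AddSubgroup.closure Z).add_mem hu' hv'
      | neg u hu hu' => rw [neg_mul]; exact (AddSubgroup.closure Z).neg_mem hu'
    have hxN : (MulOpposite.op x : Dᵐᵒᵖ) ∈ N := hx
    rw [← hT] at hxN
    have key : ∀ (w : Dᵐᵒᵖ), w ∈ Submodule.span ↥A.op (T : Set Dᵐᵒᵖ) →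
        MulOpposite.unop w ∈ AddSubgroup.closure Z := by
      intro w hw
      induction hw using Submodule.span_induction with
      | mem t ht =>
          refine AddSubgroup.subset_closure ⟨MulOpposite.unop t, ?_, 1, A.one_mem, (mul_one _).symm⟩
          exact Finset.mem_image_of_mem _ ht
      | zero => simpa using (AddSubgroup.closure Z).zero_mem
      | add u v hu hv hu' hv' => simpa using (AddSubgroup.closure Z).add_mem hu' hv'
      | smul b u hu hu' =>
          have hb : MulOpposite.unop (b : Dᵐᵒᵖ) ∈ A := b.2
          have heq : MulOpposite.unop ((b : ↥A.op) • u) =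
              MulOpposite.unop u * MulOpposite.unop (b : Dᵐᵒᵖ) := rfl
          rw [heq]
          exact hstab _ hu' _ hb
    simpa using key _ hxN
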